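/- arXiv:2412.00003 — 3 statements merged into one kernel-verified Lean document; each statement's English description precedes it below -/
import Mathlib

section
/- Let A be an inverse cyclic full matrix. Every strictly lower triangular entry with i ≠ n satisfies a_{ij} = (a_{i,i+1}⋯a_{n-1,n} a_{n1} a_{12}⋯a_{j-1,j})/(a_{i+1,i+1}⋯a_{nn} a_{11}⋯a_{j-1,j-1}) for j < i < n, and a_{nj} = (a_{n1}a_{12}⋯a_{j-1,j})/(a_{11}⋯a_{j-1,j-1}) for j < n. -/
open Matrix Finset Fin.NatCast

/-- A matrix (of order ≥ 2) has the *inverse cyclic property* if all its diagonal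
entries are nonzero and the three cyclic entry conditions hold. -/
def InvCyclic {n : ℕ} (A : Matrix (Fin (n + 2)) (Fin (n + 2)) ℝ) : Prop :=
  (∀ i, A i i ≠ 0) ∧
  (∀ i k j : Fin (n + 2), i < k → k < j → A i j = A i k * A k j / A k k) ∧
  (∀ i j : Fin (n + 2), j < i → i ≠ Fin.last (n + 1) →
    A i j = A i (Fin.last (n + 1)) * A (Fin.last (n + 1)) j /
      A (Fin.last (n + 1)) (Fin.last (n + 1))) ∧
  (∀ j : Fin (n + 2), j < Fin.last (n + 1) →
    A (Fin.last (n + 1)) j = A (Fin.last (n + 1)) 0 * A 0 j / A 0 0)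

/-- `d`, the product of the diagonal entries. -/
def diagProd {n : ℕ} (A : Matrix (Fin (n + 2)) (Fin (n + 2)) ℝ) : ℝ := ∏ i, A i i

/-- `c`, the cyclic product `a₁₂a₂₃⋯a_{(n-1)n}a_{n1}`. -/
def cycProd {n : ℕ} (A : Matrix (Fin (n + 2)) (Fin (n + 2)) ℝ) : ℝ :=
  ∏ i : Fin (n + 2), A i (i + 1)

lemma fcast_lt {n a b : ℕ} (hab : a < b) (hb : b < n + 2) :
    ((a : Fin (n + 2)) < (b : Fin (n + 2))) := by
  rw [Fin.lt_def, Fin.val_cast_of_lt (hab.trans hb), Fin.val_cast_of_lt hb]; exact hab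

lemma chain_mul {n : ℕ} (A : Matrix (Fin (n + 2)) (Fin (n + 2)) ℝ)
    (hfull : ∀ i j, A i j ≠ 0) (hic : InvCyclic A) :
    ∀ j i : ℕ, i < j → j ≤ n + 1 →
      A (i : Fin (n + 2)) (j : Fin (n + 2)) *
        (∏ t ∈ Finset.Ico (i + 1) j, A (t : Fin (n + 2)) (t : Fin (n + 2))) =
      ∏ t ∈ Finset.Ico i j, A (t : Fin (n + 2)) ((t + 1 : ℕ) : Fin (n + 2)) := by
  intro j
  induction j with
  | zero => intro i h; omega
  | succ j ih =>
    intro i hij hj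
    rcases Nat.lt_or_ge i j with hij' | hij'
    · have hj' : j ≤ n + 1 := le_of_lt (Nat.lt_of_lt_of_le (Nat.lt_succ_self j) (by omega))
      have key := hic.2.1 (i : Fin (n+2)) (j : Fin (n+2)) ((j+1 : ℕ) : Fin (n+2))
        (fcast_lt hij' (by omega)) (fcast_lt (Nat.lt_succ_self j) (by omega))
      have hA := ih i hij' (by omega)
      rw [Finset.prod_Ico_succ_top (by omega : i + 1 ≤ j),
        Finset.prod_Ico_succ_top (by omega : i ≤ j), ← hA, key]
      have := hfull (j : Fin (n+2)) (j : Fin (n+2))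
      field_simp
    · have : i = j := by omega
      subst this
      simp [Finset.Ico_self, Nat.Ico_succ_singleton]


theorem stmt15 {n : ℕ} (A : Matrix (Fin (n + 2)) (Fin (n + 2)) ℝ)
    (hfull : ∀ i j, A i j ≠ 0) (hic : InvCyclic A) :
    (∀ i j : Fin (n + 2), j < i → i ≠ Fin.last (n + 1) →
      A i j = ((∏ t ∈ Finset.Ico (i : ℕ) (n + 1),
            A (t : Fin (n + 2)) ((t + 1 : ℕ) : Fin (n + 2))) *
          A (Fin.last (n + 1)) 0 *
          (∏ t ∈ Finset.range (j : ℕ),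
            A (t : Fin (n + 2)) ((t + 1 : ℕ) : Fin (n + 2)))) /
        ((∏ t ∈ Finset.Ico ((i : ℕ) + 1) (n + 2), A (t : Fin (n + 2)) (t : Fin (n + 2))) *
          (∏ t ∈ Finset.range (j : ℕ), A (t : Fin (n + 2)) (t : Fin (n + 2))))) ∧
    (∀ j : Fin (n + 2), j < Fin.last (n + 1) →
      A (Fin.last (n + 1)) j = (A (Fin.last (n + 1)) 0 *
          ∏ t ∈ Finset.range (j : ℕ),
            A (t : Fin (n + 2)) ((t + 1 : ℕ) : Fin (n + 2))) /
        (∏ t ∈ Finset.range (j : ℕ), A (t : Fin (n + 2)) (t : Fin (n + 2)))) := by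
  have hlast : ((n + 1 : ℕ) : Fin (n + 2)) = Fin.last (n + 1) := by
    apply Fin.ext; rw [Fin.val_cast_of_lt (by omega : n + 1 < n + 2), Fin.val_last]
  have hzero : ((0 : ℕ) : Fin (n + 2)) = 0 := by simp
  have hself : ∀ i : Fin (n + 2), (((i : ℕ) : Fin (n + 2))) = i := fun i => Fin.cast_val_eq_self i
  -- second part first
  have part2 : ∀ j : Fin (n + 2), j < Fin.last (n + 1) →
      A (Fin.last (n + 1)) j = (A (Fin.last (n + 1)) 0 *
          ∏ t ∈ Finset.range (j : ℕ),
            A (t : Fin (n + 2)) ((t + 1 : ℕ) : Fin (n + 2))) /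
        (∏ t ∈ Finset.range (j : ℕ), A (t : Fin (n + 2)) (t : Fin (n + 2))) := by
    intro j hj
    rcases Nat.eq_zero_or_pos (j : ℕ) with h0 | h0
    · have : j = 0 := by ext; simpa using h0
      subst this
      simp
    · have hjn : (j : ℕ) ≤ n + 1 := by omega
      have key := hic.2.2.2 j hj
      have hA := chain_mul A hfull hic (j : ℕ) 0 h0 hjn
      rw [hzero, hself] at hA
      have hsplit : (∏ t ∈ Finset.range (j : ℕ), A (t : Fin (n + 2)) (t : Fin (n + 2)))
          = A ((0:ℕ) : Fin (n+2)) ((0:ℕ) : Fin (n+2)) *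
            ∏ t ∈ Finset.Ico 1 (j : ℕ), A (t : Fin (n + 2)) (t : Fin (n + 2)) := by
        rw [Finset.range_eq_Ico, Finset.prod_eq_prod_Ico_succ_bot h0]
      rw [← Finset.range_eq_Ico] at hA
      rw [key, hsplit, hzero]
      have h00 := hfull (0 : Fin (n+2)) 0
      have hIco : (∏ t ∈ Finset.Ico 1 (j:ℕ), A (t : Fin (n+2)) (t : Fin (n+2))) ≠ 0 :=
        Finset.prod_ne_zero_iff.mpr (fun t _ => hfull _ _)
      rw [← hA]
      field_simp
  refine ⟨?_, part2⟩
  intro i j hji hil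
  have hin : (i : ℕ) < n + 1 := by
    have := i.isLt
    rcases Nat.lt_or_ge (i : ℕ) (n + 1) with h | h
    · exact h
    · exact absurd (Fin.ext (by omega : (i : ℕ) = n + 1)) hil
  have key := hic.2.2.1 i j hji hil
  have hAil := chain_mul A hfull hic (n + 1) (i : ℕ) hin (le_refl _)
  rw [hself, hlast] at hAil
  have hAlj := part2 j (lt_of_lt_of_le hji (Fin.le_last i))
  have hsplit : (∏ t ∈ Finset.Ico ((i : ℕ) + 1) (n + 2), A (t : Fin (n + 2)) (t : Fin (n + 2)))
      = (∏ t ∈ Finset.Ico ((i : ℕ) + 1) (n + 1), A (t : Fin (n + 2)) (t : Fin (n + 2))) *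
        A (Fin.last (n+1)) (Fin.last (n+1)) := by
    rw [Finset.prod_Ico_succ_top (by omega : (i:ℕ) + 1 ≤ n + 1), hlast]
  rw [key, hAlj, hsplit, ← hAil]
  have h1 := hfull (Fin.last (n+1)) (Fin.last (n+1))
  have h2 : (∏ t ∈ Finset.Ico ((i:ℕ)+1) (n+1), A (t : Fin (n+2)) (t : Fin (n+2))) ≠ 0 :=
    Finset.prod_ne_zero_iff.mpr (fun t _ => hfull _ _)
  have h3 : (∏ t ∈ Finset.range (j:ℕ), A (t : Fin (n+2)) (t : Fin (n+2))) ≠ 0 :=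
    Finset.prod_ne_zero_iff.mpr (fun t _ => hfull _ _)
  field_simp
end

section
/- The circulant matrix A = α_1 I + α_2 Z + ⋯ + α_n Z^{n-1} (with Z the n-cycle permutation matrix and all α_i nonzero) has the inverse cyclic property if and only if α_r = α_2^{r-1}/α_1^{r-2} for r = 3, …, n. -/
open Matrix Finset
open Fin.NatCast

/-- The `n`-cycle permutation matrix `Z = (e^n, e^1, …, e^{n-1})`. -/
def Zmat (n : ℕ) : Matrix (Fin (n + 2)) (Fin (n + 2)) ℝ :=
  Matrix.of fun i j => if j = i + 1 then 1 else 0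

lemma Zpow (n k : ℕ) (i j : Fin (n+2)) :
    (Zmat n ^ k) i j = if j = i + (k : Fin (n+2)) then 1 else 0 := by
  induction k generalizing i j with
  | zero => simp [Matrix.one_apply, eq_comm]
  | succ k ih =>
    rw [pow_succ, Matrix.mul_apply]
    simp only [ih]
    rw [Finset.sum_eq_single (i + (k : Fin (n+2)))]
    · push_cast
      by_cases h : j = i + ((k : Fin (n+2)) + 1) <;> simp [Zmat, h, add_assoc]
    · intro b _ hb
      simp [hb]
    · simp

lemma Aentry (n : ℕ) (α : Fin (n+2) → ℝ) (i j : Fin (n+2)) :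
    (∑ r : Fin (n + 2), α r • Zmat n ^ (r : ℕ)) i j = α (j - i) := by
  simp only [Matrix.sum_apply, Matrix.smul_apply, Zpow, smul_eq_mul, Fin.cast_val_eq_self]
  rw [Finset.sum_eq_single (j - i)]
  · simp
  · intro b _ hb
    have : j ≠ i + b := by intro h; apply hb; simp [h]
    simp [this]
  · simp

lemma subval_lt {n : ℕ} {i j : Fin (n+2)} (h : j < i) :
    ((j - i : Fin (n+2)) : ℕ) = n + 2 - (i : ℕ) + (j : ℕ) := by
  rw [Fin.sub_def]
  have hi := i.isLt
  have hj : (j : ℕ) < (i : ℕ) := h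
  simp only
  exact Nat.mod_eq_of_lt (by omega)

lemma arith17 (x y : ℝ) (hx : x ≠ 0) (a b : ℕ) (ha : 1 ≤ a) (hb : 1 ≤ b) :
    y ^ (a + b) / x ^ (a + b - 1) = (y ^ a / x ^ (a - 1)) * (y ^ b / x ^ (b - 1)) / x := by
  obtain ⟨a', rfl⟩ : ∃ a', a = a' + 1 := ⟨a - 1, by omega⟩
  obtain ⟨b', rfl⟩ : ∃ b', b = b' + 1 := ⟨b - 1, by omega⟩
  have : a' + 1 + (b' + 1) - 1 = a' + b' + 1 := by omega
  rw [this]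
  simp only [Nat.add_sub_cancel]
  field_simp
  ring

theorem stmt17 {n : ℕ} (α : Fin (n + 2) → ℝ) (hα : ∀ r, α r ≠ 0)
    (A : Matrix (Fin (n + 2)) (Fin (n + 2)) ℝ)
    (hA : A = ∑ r : Fin (n + 2), α r • Zmat n ^ (r : ℕ)) :
    InvCyclic A ↔
    (∀ r : Fin (n + 2), 2 ≤ (r : ℕ) →
      α r = (α 1) ^ (r : ℕ) / (α 0) ^ ((r : ℕ) - 1)) := by
  have hAe : ∀ i j, A i j = α (j - i) := by
    intro i j; rw [hA]; exact Aentry n α i j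
  have hneg : ((0 : Fin (n+2)) - Fin.last (n+1)) = 1 := by
    apply Fin.ext
    rw [subval_lt (by rw [Fin.lt_def, Fin.val_last, Fin.val_zero]; omega)]
    rw [Fin.val_last, Fin.val_zero, Fin.val_one]
    omega
  have hlast : (Fin.last (n+1) : ℕ) = n + 1 := rfl
  constructor
  · rintro ⟨h1, h2, h3, h4⟩
    have hrecur : ∀ j : Fin (n+2), j < Fin.last (n+1) →
        α (j - Fin.last (n+1)) = α 1 * α j / α 0 := by
      intro j hj
      have := h4 j hj
      rw [hAe, hAe, hAe, hAe, hneg, sub_zero, sub_self] at this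
      exact this
    have main : ∀ m : ℕ, m ≤ n + 1 → 1 ≤ m →
        α ((m : ℕ) : Fin (n+2)) = α 1 ^ m / α 0 ^ (m - 1) := by
      intro m
      induction m with
      | zero => omega
      | succ m ih =>
        intro hm _
        rcases Nat.eq_zero_or_pos m with h0 | h0
        · subst h0; simp
        · have hvm : ((m : Fin (n+2)) : ℕ) = m := Fin.val_cast_of_lt (by omega)
          have hj : ((m : ℕ) : Fin (n+2)) < Fin.last (n+1) := by
            rw [Fin.lt_def, hvm, Fin.val_last]; omega
          have hrec := hrecur ((m : ℕ) : Fin (n+2)) hj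
          have hsub : ((m : ℕ) : Fin (n+2)) - Fin.last (n+1) = ((m + 1 : ℕ) : Fin (n+2)) := by
            apply Fin.ext
            rw [subval_lt hj, hvm, Fin.val_last, Fin.val_cast_of_lt (by omega)]
            omega
          rw [hsub, ih (by omega) h0] at hrec
          rw [hrec]
          obtain ⟨m', rfl⟩ : ∃ m', m = m' + 1 := ⟨m - 1, by omega⟩
          simp only [Nat.add_sub_cancel]
          have h0' := hα 0
          field_simp
          ring
    intro r hr
    have hr1 : (r : ℕ) ≤ n + 1 := by omega
    have := main (r : ℕ) hr1 (by omega)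
    rwa [Fin.cast_val_eq_self] at this
  · intro h
    have key : ∀ v : Fin (n+2), 1 ≤ (v : ℕ) →
        α v = α 1 ^ (v : ℕ) / α 0 ^ ((v : ℕ) - 1) := by
      intro v hv
      rcases Nat.lt_or_ge (v : ℕ) 2 with hv2 | hv2
      · have : v = 1 := by apply Fin.ext; simp; omega
        subst this; simp
      · exact h v hv2
    refine ⟨?_, ?_, ?_, ?_⟩
    · intro i
      rw [hAe, sub_self]
      exact hα 0
    · intro i k j hik hkj
      rw [hAe, hAe, hAe, hAe, sub_self]
      have hik' : (i : ℕ) < (k : ℕ) := hik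
      have hkj' : (k : ℕ) < (j : ℕ) := hkj
      have e1 : ((k - i : Fin (n+2)) : ℕ) = (k : ℕ) - (i : ℕ) :=
        Fin.sub_val_of_le (le_of_lt hik)
      have e2 : ((j - k : Fin (n+2)) : ℕ) = (j : ℕ) - (k : ℕ) :=
        Fin.sub_val_of_le (le_of_lt hkj)
      have e3 : ((j - i : Fin (n+2)) : ℕ) = ((k - i : Fin (n+2)) : ℕ) + ((j - k : Fin (n+2)) : ℕ) := by
        rw [e1, e2, Fin.sub_val_of_le (le_of_lt (lt_trans hik hkj))]
        omega
      rw [key (j - i) (by omega), key (k - i) (by omega), key (j - k) (by omega), e3]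
      exact arith17 (α 0) (α 1) (hα 0) _ _ (by omega) (by omega)
    · intro i j hji hil
      rw [hAe, hAe, hAe, hAe, sub_self]
      have hji' : (j : ℕ) < (i : ℕ) := hji
      have hil' : (i : ℕ) < n + 1 := by
        have : (i : ℕ) ≤ n + 1 := by have := i.isLt; omega
        rcases Nat.lt_or_ge (i : ℕ) (n+1) with h' | h'
        · exact h'
        · exfalso; apply hil; apply Fin.ext; rw [hlast]; omega
      have hjl : j < Fin.last (n+1) := by
        rw [Fin.lt_def, hlast]; omega
      have e1 : ((Fin.last (n+1) - i : Fin (n+2)) : ℕ) = n + 1 - (i : ℕ) := by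
        rw [Fin.sub_val_of_le (by rw [Fin.le_def, hlast]; omega), hlast]
      have e2 : ((j - Fin.last (n+1) : Fin (n+2)) : ℕ) = (j : ℕ) + 1 := by
        rw [subval_lt hjl, hlast]
        omega
      have e3 : ((j - i : Fin (n+2)) : ℕ) =
          ((Fin.last (n+1) - i : Fin (n+2)) : ℕ) + ((j - Fin.last (n+1) : Fin (n+2)) : ℕ) := by
        rw [e1, e2, subval_lt hji]
        omega
      rw [key (j - i) (by omega), key (Fin.last (n+1) - i) (by omega),
        key (j - Fin.last (n+1)) (by omega), e3]
      exact arith17 (α 0) (α 1) (hα 0) _ _ (by omega) (by omega)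
    · intro j hj
      rw [hAe, hAe, hAe, hAe, hneg, sub_zero, sub_self]
      have e2 : ((j - Fin.last (n+1) : Fin (n+2)) : ℕ) = (j : ℕ) + 1 := by
        rw [subval_lt hj, hlast]
        omega
      rcases Nat.eq_zero_or_pos (j : ℕ) with h0 | h0
      · have hj0 : j = 0 := Fin.ext (by rw [Fin.val_zero]; exact h0)
        subst hj0
        rw [hneg]
        have := hα 0
        field_simp
      · rw [key (j - Fin.last (n+1)) (by omega), key j h0, e2]
        have h1 : ((j : ℕ) + 1) = 1 + (j : ℕ) := by omega
        rw [h1]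
        have := arith17 (α 0) (α 1) (hα 0) 1 (j : ℕ) (le_refl 1) h0
        simpa using this
end

section
/- Let A be an n×n type D matrix with parameters a_n > a_{n-1} > ⋯ > a_1 and a_n < 0. Then A is nonsingular and A^{-1} is a tridiagonal matrix with entrywise A < 0 such that A^{-1} is a Z-matrix; consequently A^{-1} is an N-matrix (its inverse A is entrywise negative). -/
open Matrix Finset

theorem stmt19 {n : ℕ} (a : Fin (n + 1) → ℝ) (ha : StrictMono a)
    (hneg : a (Fin.last n) < 0) (A : Matrix (Fin (n + 1)) (Fin (n + 1)) ℝ)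
    (hA : ∀ i j, A i j = a (min i j)) :
    A.det ≠ 0 ∧
    -- `A⁻¹` is tridiagonal
    (∀ i j : Fin (n + 1), (i : ℕ) + 1 < (j : ℕ) ∨ (j : ℕ) + 1 < (i : ℕ) → A⁻¹ i j = 0) ∧
    -- `A⁻¹` is a Z-matrix
    (∀ i j, i ≠ j → A⁻¹ i j ≤ 0) ∧
    -- whose inverse `A` is entrywise negative, so `A⁻¹` is an `N`-matrix
    (∀ i j, A i j < 0) := by
  have hAneg : ∀ i j, A i j < 0 := fun i j => by
    rw [hA]
    exact lt_of_le_of_lt (ha.monotone (Fin.le_last _)) hneg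
  -- extended function g : ℕ → ℝ, g 0 = 0, g (k+1) = a k (for k ≤ n)
  set g : ℕ → ℝ := fun k =>
    if k = 0 then 0 else a ⟨min (k - 1) n, Nat.lt_succ_of_le (min_le_right _ _)⟩ with hg_def
  have hg0 : g 0 = 0 := by rw [hg_def]; norm_num
  have hg : ∀ i : Fin (n + 1), g ((i : ℕ) + 1) = a i := by
    intro i
    rw [hg_def]
    simp only [Nat.add_sub_cancel, Nat.succ_ne_zero, if_false]
    exact congrArg a (Fin.ext (by simp [Nat.min_eq_left (Nat.lt_succ_iff.mp i.isLt)]))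
  -- the diagonal entries
  set d : Fin (n + 1) → ℝ := fun i => g ((i : ℕ) + 1) - g (i : ℕ) with hd_def
  have hd0 : ∀ i : Fin (n + 1), 0 < (i : ℕ) → 0 < d i := by
    intro i hi
    have h1 : ((⟨(i : ℕ) - 1, by omega⟩ : Fin (n + 1)) : ℕ) + 1 = (i : ℕ) := by
      simp; omega
    have h2 : g (i : ℕ) = a ⟨(i : ℕ) - 1, by omega⟩ := by
      conv_lhs => rw [← h1]
      exact hg _
    have h3 : (⟨(i : ℕ) - 1, by omega⟩ : Fin (n + 1)) < i := by
      show (i : ℕ) - 1 < (i : ℕ); omega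
    show 0 < g ((i : ℕ) + 1) - g (i : ℕ)
    rw [hg i, h2, sub_pos]
    exact ha h3
  have hdneg : ∀ i : Fin (n + 1), (i : ℕ) = 0 → d i < 0 := by
    intro i hi
    have : d i = a i := by
      show g ((i : ℕ) + 1) - g (i : ℕ) = a i
      rw [hg i, hi, hg0, sub_zero]
    rw [this]
    exact lt_of_le_of_lt (ha.monotone (Fin.le_last _)) hneg
  have hdne : ∀ i : Fin (n + 1), d i ≠ 0 := by
    intro i
    rcases Nat.eq_zero_or_pos (i : ℕ) with h | h
    · exact ne_of_lt (hdneg i h)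
    · exact ne_of_gt (hd0 i h)
  set L : Matrix (Fin (n + 1)) (Fin (n + 1)) ℝ :=
    Matrix.of fun i j => if (j : ℕ) ≤ (i : ℕ) then 1 else 0 with hL_def
  set K : Matrix (Fin (n + 1)) (Fin (n + 1)) ℝ :=
    Matrix.of fun i j => if (i : ℕ) = (j : ℕ) then 1
      else if (i : ℕ) = (j : ℕ) + 1 then -1 else 0 with hK_def
  -- factorization A = L D Lᵀ
  have hfact : A = L * Matrix.diagonal d * Lᵀ := by
    ext i j
    rw [hA, Matrix.mul_apply]
    have hterm : ∀ k : Fin (n + 1),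
        (L * Matrix.diagonal d) i k * Lᵀ k j
          = (fun k : ℕ => if k ≤ (i : ℕ) ∧ k ≤ (j : ℕ) then g (k + 1) - g k else 0) (k : ℕ) := by
      intro k
      rw [Matrix.mul_diagonal]
      simp only [hL_def, Matrix.transpose_apply, Matrix.of_apply, hd_def]
      split_ifs <;> first | (exfalso; omega) | ring
    rw [Finset.sum_congr rfl (fun k _ => hterm k),
      Fin.sum_univ_eq_sum_range (fun k : ℕ => if k ≤ (i : ℕ) ∧ k ≤ (j : ℕ) then g (k + 1) - g k else 0) (n + 1),
      ← Finset.sum_filter]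
    have hfil : Finset.filter (fun k => k ≤ (i : ℕ) ∧ k ≤ (j : ℕ)) (Finset.range (n + 1))
        = Finset.range (min (i : ℕ) (j : ℕ) + 1) := by
      ext k
      simp only [Finset.mem_filter, Finset.mem_range]
      have := i.isLt; have := j.isLt
      omega
    rw [hfil, Finset.sum_range_sub g]
    have hmin : ((min i j : Fin (n + 1)) : ℕ) = min (i : ℕ) (j : ℕ) := by
      simp only [min_def, Fin.le_def]
      split_ifs <;> omega
    have h5 := hg (min i j)
    rw [hmin] at h5
    rw [h5, hg0, sub_zero]
  -- L * K = 1
  have hLK : L * K = 1 := by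
    ext i j
    rw [Matrix.mul_apply]
    have hterm : ∀ k : Fin (n + 1), L i k * K k j
        = (if (k : ℕ) = (j : ℕ) ∧ (j : ℕ) ≤ (i : ℕ) then (1 : ℝ) else 0)
          + (if (k : ℕ) = (j : ℕ) + 1 ∧ (j : ℕ) + 1 ≤ (i : ℕ) then (-1 : ℝ) else 0) := by
      intro k
      simp only [hL_def, hK_def, Matrix.of_apply]
      split_ifs <;> first | (exfalso; omega) | ring
    rw [Finset.sum_congr rfl (fun k _ => hterm k), Finset.sum_add_distrib]
    have h1 : (∑ k : Fin (n + 1),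
        if (k : ℕ) = (j : ℕ) ∧ (j : ℕ) ≤ (i : ℕ) then (1 : ℝ) else 0)
        = if (j : ℕ) ≤ (i : ℕ) then 1 else 0 := by
      rw [Finset.sum_eq_single j]
      · split_ifs <;> first | (exfalso; omega) | ring
      · intro b _ hb
        have : (b : ℕ) ≠ (j : ℕ) := fun h => hb (Fin.ext h)
        simp [this]
      · simp
    rw [h1]
    by_cases hj : (j : ℕ) + 1 ≤ n
    · have h2 : (∑ k : Fin (n + 1),
          if (k : ℕ) = (j : ℕ) + 1 ∧ (j : ℕ) + 1 ≤ (i : ℕ) then (-1 : ℝ) else 0)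
          = if (j : ℕ) + 1 ≤ (i : ℕ) then -1 else 0 := by
        rw [Finset.sum_eq_single (⟨(j : ℕ) + 1, by omega⟩ : Fin (n + 1))]
        · simp
        · intro b _ hb
          have : (b : ℕ) ≠ (j : ℕ) + 1 := fun h => hb (Fin.ext (by simpa using h))
          simp [this]
        · simp
      rw [h2]
      simp only [Matrix.one_apply, Fin.ext_iff]
      split_ifs <;> first | (exfalso; omega) | ring
    · have h2 : (∑ k : Fin (n + 1),
          if (k : ℕ) = (j : ℕ) + 1 ∧ (j : ℕ) + 1 ≤ (i : ℕ) then (-1 : ℝ) else 0) = 0 := by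
        apply Finset.sum_eq_zero
        intro k _
        have := k.isLt
        split_ifs with h
        · exact absurd h.1 (by omega)
        · rfl
      rw [h2, add_zero]
      have hi := i.isLt
      simp only [Matrix.one_apply, Fin.ext_iff]
      split_ifs <;> first | (exfalso; omega) | ring
  have hKL : K * L = 1 := mul_eq_one_comm.mp hLK
  -- the inverse candidate
  set M : Matrix (Fin (n + 1)) (Fin (n + 1)) ℝ :=
    Kᵀ * Matrix.diagonal (fun i => (d i)⁻¹) * K with hM_def
  have hAM : A * M = 1 := by
    rw [hfact, hM_def]
    have h1 : Lᵀ * Kᵀ = 1 := by rw [← Matrix.transpose_mul, hKL, Matrix.transpose_one]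
    have h2 : Matrix.diagonal d * Matrix.diagonal (fun i => (d i)⁻¹) = 1 := by
      rw [Matrix.diagonal_mul_diagonal]
      convert Matrix.diagonal_one with i
      exact mul_inv_cancel₀ (hdne _)
    calc L * Matrix.diagonal d * Lᵀ * (Kᵀ * Matrix.diagonal (fun i => (d i)⁻¹) * K)
        = L * ((Matrix.diagonal d * ((Lᵀ * Kᵀ) * Matrix.diagonal (fun i => (d i)⁻¹))) * K) := by
          simp only [Matrix.mul_assoc]
      _ = L * K := by rw [h1, Matrix.one_mul, h2, Matrix.one_mul]
      _ = 1 := hLK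
  have hdet : A.det ≠ 0 := by
    intro h0
    have := congrArg Matrix.det hAM
    rw [Matrix.det_mul, Matrix.det_one, h0, zero_mul] at this
    exact zero_ne_one this
  have hinv : A⁻¹ = M := Matrix.inv_eq_right_inv hAM
  -- entrywise formula for M
  have hMapply : ∀ i j, M i j = ∑ k : Fin (n + 1),
      (if (k : ℕ) = (i : ℕ) then (1 : ℝ) else if (k : ℕ) = (i : ℕ) + 1 then -1 else 0)
      * (d k)⁻¹
      * (if (k : ℕ) = (j : ℕ) then 1 else if (k : ℕ) = (j : ℕ) + 1 then -1 else 0) := by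
    intro i j
    rw [hM_def, Matrix.mul_apply]
    apply Finset.sum_congr rfl
    intro k _
    rw [Matrix.mul_diagonal]
    simp only [hK_def, Matrix.transpose_apply, Matrix.of_apply]
  refine ⟨hdet, ?_, ?_, hAneg⟩
  · -- tridiagonal
    intro i j hij
    rw [hinv, hMapply]
    apply Finset.sum_eq_zero
    intro k _
    rcases hij with h | h <;> split_ifs <;> first | (exfalso; omega) | ring
  · -- Z-matrix
    intro i j hij
    rw [hinv, hMapply]
    have hijn : (i : ℕ) ≠ (j : ℕ) := fun h => hij (Fin.ext h)
    rcases lt_trichotomy ((i : ℕ) + 1) (j : ℕ) with h | h | h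
    · have hz : (∑ k : Fin (n + 1),
          (if (k : ℕ) = (i : ℕ) then (1 : ℝ) else if (k : ℕ) = (i : ℕ) + 1 then -1 else 0)
          * (d k)⁻¹
          * (if (k : ℕ) = (j : ℕ) then 1 else if (k : ℕ) = (j : ℕ) + 1 then -1 else 0)) = 0 := by
        apply Finset.sum_eq_zero
        intro k _
        split_ifs <;> first | (exfalso; omega) | ring
      rw [hz]
    · -- j = i + 1
      have hsum : (∑ k : Fin (n + 1),
          (if (k : ℕ) = (i : ℕ) then (1 : ℝ) else if (k : ℕ) = (i : ℕ) + 1 then -1 else 0)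
          * (d k)⁻¹
          * (if (k : ℕ) = (j : ℕ) then 1 else if (k : ℕ) = (j : ℕ) + 1 then -1 else 0))
          = -(d j)⁻¹ := by
        rw [Finset.sum_eq_single j]
        · split_ifs <;> first | (exfalso; omega) | ring
        · intro b _ hb
          have hbn : (b : ℕ) ≠ (j : ℕ) := fun he => hb (Fin.ext he)
          split_ifs <;> first | (exfalso; omega) | ring
        · simp
      rw [hsum, neg_nonpos]
      exact le_of_lt (inv_pos.mpr (hd0 j (by omega)))
    · rcases lt_trichotomy ((j : ℕ) + 1) (i : ℕ) with h' | h' | h'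
      · have hz : (∑ k : Fin (n + 1),
            (if (k : ℕ) = (i : ℕ) then (1 : ℝ) else if (k : ℕ) = (i : ℕ) + 1 then -1 else 0)
            * (d k)⁻¹
            * (if (k : ℕ) = (j : ℕ) then 1 else if (k : ℕ) = (j : ℕ) + 1 then -1 else 0)) = 0 := by
          apply Finset.sum_eq_zero
          intro k _
          split_ifs <;> first | (exfalso; omega) | ring
        rw [hz]
      · -- i = j + 1
        have hsum : (∑ k : Fin (n + 1),
            (if (k : ℕ) = (i : ℕ) then (1 : ℝ) else if (k : ℕ) = (i : ℕ) + 1 then -1 else 0)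
            * (d k)⁻¹
            * (if (k : ℕ) = (j : ℕ) then 1 else if (k : ℕ) = (j : ℕ) + 1 then -1 else 0))
            = -(d i)⁻¹ := by
          rw [Finset.sum_eq_single i]
          · split_ifs <;> first | (exfalso; omega) | ring
          · intro b _ hb
            have hbn : (b : ℕ) ≠ (i : ℕ) := fun he => hb (Fin.ext he)
            split_ifs <;> first | (exfalso; omega) | ring
          · simp
        rw [hsum, neg_nonpos]
        exact le_of_lt (inv_pos.mpr (hd0 i (by omega)))
      · omega
end
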